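/- For f = x^2 + y^2 and g = xy, the operator R(s) = y^2 ∂_x ∂_y − x y ∂_y^2 − y ∂_x s − x ∂_y s + y ∂_x − 2x ∂_y annihilates (1/g)·(f/g)^s; that is, applying the natural action of the Weyl algebra with parameter s to the element (1/(xy))·((x^2+y^2)/(xy))^s of C[x,y,s,1/(fg)]·(f/g)^s gives zero. -/

import Mathlib

set_option synthInstance.maxHeartbeats 1000000
set_option maxHeartbeats 4000000

noncomputable section

/-- Auxiliary computation over an arbitrary field: the rational-function identity
underlying the annihilation statement, with all derivation values specified. -/
lemma main_aux8 {K : Type*} [Field K] [Algebra ℂ K] (dx dy : Derivation ℂ K K)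
    (x y s : K) (hx : x ≠ 0) (hy : y ≠ 0) (hf : x ^ 2 + y ^ 2 ≠ 0)
    (hdxx : dx x = 1) (hdxy : dx y = 0) (hdxs : dx s = 0)
    (hdyy : dy y = 1) (hdyx : dy x = 0) (hdys : dy s = 0) :
    y ^ 2 * (dx (dy (1/(x*y)) + s * (1/(x*y)) * ((2*y)/(x^2+y^2) - x/(x*y)))
        + s * (dy (1/(x*y)) + s * (1/(x*y)) * ((2*y)/(x^2+y^2) - x/(x*y)))
            * ((2*x)/(x^2+y^2) - y/(x*y)))
      - x * y * (dy (dy (1/(x*y)) + s * (1/(x*y)) * ((2*y)/(x^2+y^2) - x/(x*y)))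
        + s * (dy (1/(x*y)) + s * (1/(x*y)) * ((2*y)/(x^2+y^2) - x/(x*y)))
            * ((2*y)/(x^2+y^2) - x/(x*y)))
      - y * (dx (s * (1/(x*y))) + s * (s * (1/(x*y))) * ((2*x)/(x^2+y^2) - y/(x*y)))
      - x * (dy (s * (1/(x*y))) + s * (s * (1/(x*y))) * ((2*y)/(x^2+y^2) - x/(x*y)))
      + y * (dx (1/(x*y)) + s * (1/(x*y)) * ((2*x)/(x^2+y^2) - y/(x*y)))
      - 2 * x * (dy (1/(x*y)) + s * (1/(x*y)) * ((2*y)/(x^2+y^2) - x/(x*y))) = 0 := by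
  have h2x : dx 2 = 0 := by
    rw [show (2:K) = 1 + 1 by norm_num, map_add, Derivation.map_one_eq_zero, add_zero]
  have h2y : dy 2 = 0 := by
    rw [show (2:K) = 1 + 1 by norm_num, map_add, Derivation.map_one_eq_zero, add_zero]
  simp only [Derivation.leibniz_div, Derivation.leibniz_inv, Derivation.leibniz,
    Derivation.leibniz_pow, map_add, map_sub, map_mul, map_one, Derivation.map_one_eq_zero,
    hdxx, hdxy, hdxs, hdyy, hdyx, hdys, h2x, h2y, smul_eq_mul, map_zero, nsmul_eq_mul]
  field_simp
  ring_nf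
  field_simp
  ring

/-- The field `ℂ(x, y, s)` of rational functions, in which the module
`ℂ[x, y, s, 1/(fg)]·(f/g)^s` embeds (identifying `h·(f/g)^s` with its coefficient `h`). -/
abbrev K8 := FractionRing (MvPolynomial (Fin 3) ℂ)

def x8 : K8 := algebraMap (MvPolynomial (Fin 3) ℂ) K8 (MvPolynomial.X 0)
def y8 : K8 := algebraMap (MvPolynomial (Fin 3) ℂ) K8 (MvPolynomial.X 1)
def s8 : K8 := algebraMap (MvPolynomial (Fin 3) ℂ) K8 (MvPolynomial.X 2)

lemma hx8 : x8 ≠ 0 := by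
  simp only [x8, Ne, map_eq_zero_iff _ (IsFractionRing.injective (MvPolynomial (Fin 3) ℂ) K8)]
  exact MvPolynomial.X_ne_zero 0

lemma hy8 : y8 ≠ 0 := by
  simp only [y8, Ne, map_eq_zero_iff _ (IsFractionRing.injective (MvPolynomial (Fin 3) ℂ) K8)]
  exact MvPolynomial.X_ne_zero 1

lemma hf8 : x8 ^ 2 + y8 ^ 2 ≠ 0 := by
  have h : x8 ^ 2 + y8 ^ 2 = algebraMap (MvPolynomial (Fin 3) ℂ) K8
      (MvPolynomial.X 0 ^ 2 + MvPolynomial.X 1 ^ 2) := by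
    rw [map_add, map_pow, map_pow]; rfl
  rw [h, Ne, map_eq_zero_iff _ (IsFractionRing.injective (MvPolynomial (Fin 3) ℂ) K8)]
  intro h0
  have := congrArg (MvPolynomial.eval (fun i => if i = 0 then (1:ℂ) else 0)) h0
  simp at this

/-- for `f = x² + y²` and `g = xy`, the operator
`R(s) = y²∂ₓ∂_y − xy∂_y² − y∂ₓs − x∂_y s + y∂ₓ − 2x∂_y`
annihilates `(1/g)·(f/g)^s`: applying the natural action (where `∂ₓ` acts on a coefficient
`h` by `∂h/∂x + s·h·(fₓ/f − gₓ/g)`) to the element with coefficient `1/(xy)` gives zero. -/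
theorem stmt8 (dx dy : Derivation ℂ K8 K8)
    (hdxx : dx x8 = 1) (hdxy : dx y8 = 0) (hdxs : dx s8 = 0)
    (hdyy : dy y8 = 1) (hdyx : dy x8 = 0) (hdys : dy s8 = 0) :
    letI x := x8; letI y := y8; letI s := s8
    letI f : K8 := x ^ 2 + y ^ 2
    letI g : K8 := x * y
    letI Ax : K8 → K8 := fun h => dx h + s * h * ((2 * x) / f - y / g)
    letI Ay : K8 → K8 := fun h => dy h + s * h * ((2 * y) / f - x / g)
    letI v : K8 := 1 / g
    y ^ 2 * Ax (Ay v) - x * y * Ay (Ay v) - y * Ax (s * v) - x * Ay (s * v)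
      + y * Ax v - 2 * x * Ay v = 0 := by
  exact main_aux8 dx dy x8 y8 s8 hx8 hy8 hf8 hdxx hdxy hdxs hdyy hdyx hdys

end
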